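/- For every player i of a finite normal-form game Γ, the function P ↦ π_i(P) is upper semicontinuous on the probability simplex Δ(A). -/

import Mathlib

open Finset

variable {I : Type*} [Fintype I] [DecidableEq I] [Nonempty I]
variable {A : I → Type*} [∀ i, Fintype (A i)] [∀ i, DecidableEq (A i)]
  [∀ i, Nonempty (A i)]

/-- The unnormalized gain of player `j` from switching to `b` after receiving
recommendation `r`:  `Σ_{a_{-j}} P(r, a_{-j}) · [u_j(b, a_{-j}) − u_j(r, a_{-j})]`. -/
noncomputable def gain (u : I → (∀ i, A i) → ℝ) (P : (∀ i, A i) → ℝ)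
    (j : I) (r b : A j) : ℝ :=
  ∑ a : ∀ i, A i,
    if a j = r then P a * (u j (Function.update a j b) - u j a) else 0

/-- `δ` is an admissible recommendation-contingent deviation profile for the opponents
of player `i`: each `δ j r` lies in `B_j^P(r) = {r} ∪ {b : gain > 0}`. -/
def Admissible (u : I → (∀ i, A i) → ℝ) (P : (∀ i, A i) → ℝ) (i : I)
    (δ : ∀ j, A j → A j) : Prop :=
  ∀ j, j ≠ i → ∀ r : A j, δ j r = r ∨ 0 < gain u P j r (δ j r)

/-- The action profile `(a_i, δ_{-i}(a_{-i}))`. -/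
def applyDev (i : I) (δ : ∀ j, A j → A j) (a : ∀ j, A j) : ∀ j, A j :=
  fun j => if j = i then a j else δ j (a j)

/-- Correlated optimin performance of player `i` at `P`:
`π_i(P) = min_{δ_{-i} ∈ B_{-i}^P} Σ_a P(a) u_i(a_i, δ_{-i}(a_{-i}))`. -/
noncomputable def perf (u : I → (∀ i, A i) → ℝ) (P : (∀ i, A i) → ℝ) (i : I) : ℝ :=
  sInf {x | ∃ δ : ∀ j, A j → A j, Admissible u P i δ ∧
    x = ∑ a : ∀ j, A j, P a * u i (applyDev i δ a)}

/-- for every player `i`, the correlated optimin performance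
`P ↦ π_i(P)` is upper semicontinuous on the probability simplex `Δ(A)`. -/
theorem perf_upperSemicontinuousOn
    (u : I → (∀ i, A i) → ℝ) (i : I) :
    UpperSemicontinuousOn (fun P : (∀ i, A i) → ℝ => perf u P i)
      (stdSimplex ℝ (∀ i, A i)) := by
  intro P _hP y hy
  -- the feasible set at P is nonempty (take δ = identity)
  have hne : {x | ∃ δ : ∀ j, A j → A j, Admissible u P i δ ∧
      x = ∑ a : ∀ j, A j, P a * u i (applyDev i δ a)}.Nonempty := by
    exact ⟨_, ⟨fun j r => r, fun j _ r => Or.inl rfl, rfl⟩⟩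
  obtain ⟨x, ⟨δ, hδ, rfl⟩, hx⟩ := exists_lt_of_csInf_lt hne hy
  have hgc : ∀ (j : I) (r b : A j), Continuous fun Q : (∀ i, A i) → ℝ =>
      gain u Q j r b := by
    intro j r b
    unfold gain
    apply continuous_finset_sum
    intro a _
    by_cases h : a j = r
    · simp only [h, ↓reduceIte]
      exact (continuous_apply a).mul continuous_const
    · simpa [h] using continuous_const
  have hfc : Continuous fun Q : (∀ i, A i) → ℝ =>
      ∑ a : ∀ j, A j, Q a * u i (applyDev i δ a) := by
    apply continuous_finset_sum
    intro a _
    exact (continuous_apply a).mul continuous_const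
  -- eventually the value is < y
  have h1 : ∀ᶠ Q in nhds P,
      (∑ a : ∀ j, A j, Q a * u i (applyDev i δ a)) < y :=
    (hfc.tendsto P).eventually_lt_const hx
  -- eventually δ remains admissible
  have h2 : ∀ᶠ Q in nhds P, Admissible u Q i δ := by
    unfold Admissible
    rw [Filter.eventually_all]
    intro j
    rw [Filter.eventually_all]
    intro hj
    rw [Filter.eventually_all]
    intro r
    rcases hδ j hj r with h | h
    · exact Filter.Eventually.of_forall fun Q => Or.inl h
    · exact (((hgc j r (δ j r)).tendsto P).eventually_const_lt h).mono
        fun Q hQ => Or.inr hQ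
  have h3 := (h1.and h2).filter_mono (nhdsWithin_le_nhds
    (s := stdSimplex ℝ (∀ i, A i)))
  refine h3.mono fun Q ⟨hQ1, hQ2⟩ => lt_of_le_of_lt ?_ hQ1
  -- perf u Q i ≤ value of δ at Q
  apply csInf_le
  · apply Set.Finite.bddBelow
    apply Set.Finite.subset (Set.finite_range
      (fun δ : ∀ j, A j → A j => ∑ a : ∀ j, A j, Q a * u i (applyDev i δ a)))
    rintro x ⟨δ', _, rfl⟩
    exact ⟨δ', rfl⟩
  · exact ⟨δ, hQ2, rfl⟩
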